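/- Let B ⊆ A be central arrangements in K^ℓ with B solvable in A. Then for any H ∈ A \ B, the restriction satisfies |A^H| = |B|. -/

import Mathlib

open MvPolynomial

/-- The polynomial ring `S = K[x_1, ..., x_ℓ]`. -/
abbrev MvS (K : Type*) [Field K] (ℓ : ℕ) := MvPolynomial (Fin ℓ) K

variable {K : Type*} [Field K] {ℓ : ℕ}

/-- The linear functional on `K^ℓ` with coefficient vector `c`. -/
noncomputable def ellf (c : Fin ℓ → K) : (Fin ℓ → K) →ₗ[K] K :=
  ∑ i, c i • LinearMap.proj i

/-- The hyperplane (through the origin) with coefficient vector `c`. -/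
noncomputable def hypl (c : Fin ℓ → K) : Submodule K (Fin ℓ → K) :=
  LinearMap.ker (ellf c)

/-- The degree-one defining form `α = ∑ c_i x_i` of the hyperplane with coefficients `c`. -/
noncomputable def linForm (c : Fin ℓ → K) : MvS K ℓ := ∑ i, C (c i) * X i

/-- The defining polynomial `Q(A) = ∏_{H ∈ A} α_H` of an arrangement given by a finite
set of coefficient vectors. -/
noncomputable def Qpoly (A : Finset (Fin ℓ → K)) : MvS K ℓ := ∏ c ∈ A, linForm c

/-- The module of logarithmic derivations of a reduced defining polynomial `Q`:
derivations `θ = ∑ θ_i ∂_i` (identified with their coefficient tuples) with `θ(Q) ∈ Q·S`. -/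
def DerQ {K : Type*} [Field K] {ℓ : ℕ} (Q : MvS K ℓ) : Set (Fin ℓ → MvS K ℓ) :=
  {θ | Q ∣ ∑ i, θ i * pderiv i Q}

/-- The logarithmic derivation module `D(A)` of an arrangement. -/
noncomputable def DerA (A : Finset (Fin ℓ → K)) : Set (Fin ℓ → MvS K ℓ) :=
  DerQ (Qpoly A)

/-- A derivation is homogeneous of degree `d` if all of its coefficient polynomials are. -/
def IsHomog {K : Type*} [Field K] {ℓ : ℕ} (θ : Fin ℓ → MvS K ℓ) (d : ℕ) : Prop :=
  ∀ i, (θ i).IsHomogeneous d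

/-- A finite set of coefficient vectors honestly represents a central arrangement:
all forms are nonzero and no two define the same hyperplane. -/
def IsArrangement (A : Finset (Fin ℓ → K)) : Prop :=
  (∀ c ∈ A, c ≠ 0) ∧ ∀ c ∈ A, ∀ c' ∈ A, hypl c = hypl c' → c = c'

/-- `|(A ∪ {H})^H|`, the number of distinct intersections `H' ∩ H` for `H' ∈ A`. -/
noncomputable def restrictCount (A : Finset (Fin ℓ → K)) (h : Fin ℓ → K) : ℕ :=
  letI := Classical.decEq (Submodule K (Fin ℓ → K))
  (A.image fun c => hypl c ⊓ hypl h).card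

/-- `h` defines a genuine hyperplane that does not belong to the arrangement `A`. -/
def NotInArr (A : Finset (Fin ℓ → K)) (h : Fin ℓ → K) : Prop :=
  h ≠ 0 ∧ ∀ c ∈ A, hypl c ≠ hypl h

/-- `G` is a set of generators of `D(A)` as an `S`-module. -/
def Generates (A : Finset (Fin ℓ → K)) (G : Set (Fin ℓ → MvS K ℓ)) : Prop :=
  (∀ θ ∈ G, θ ∈ DerA A) ∧ ∀ θ ∈ DerA A, θ ∈ Submodule.span (MvS K ℓ) G

/-- `G` is a minimal set of generators of `D(A)`. -/
def IsMinGen (A : Finset (Fin ℓ → K)) (G : Set (Fin ℓ → MvS K ℓ)) : Prop :=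
  Generates A G ∧ ∀ G' ⊂ G, ¬ Generates A G'

/-- Every member of `G` is a nonzero homogeneous derivation. -/
def HomogGens {K : Type*} [Field K] {ℓ : ℕ} (G : Set (Fin ℓ → MvS K ℓ)) : Prop :=
  ∀ θ ∈ G, θ ≠ 0 ∧ ∃ d, IsHomog θ d

/-- `d` is the maximal degree occurring among the (nonzero homogeneous) members of `G`. -/
def MaxDeg {K : Type*} [Field K] {ℓ : ℕ} (G : Set (Fin ℓ → MvS K ℓ)) (d : ℕ) : Prop :=
  (∀ θ ∈ G, ∀ e, IsHomog θ e → e ≤ d) ∧ ∃ θ ∈ G, IsHomog θ d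

/-- The minimal restriction number `t_A`. -/
noncomputable def tA (A : Finset (Fin ℓ → K)) : ℕ :=
  sInf {n | ∃ h : Fin ℓ → K, NotInArr A h ∧ n = restrictCount A h}

/-- The intersection `∩_{c ∈ B} H_c` of the hyperplanes of `B`. -/
noncomputable def interSub (B : Finset (Fin ℓ → K)) : Submodule K (Fin ℓ → K) :=
  ⨅ c ∈ B, hypl c

/-- The characteristic polynomial of a central arrangement, via Whitney's formula
`χ(A,t) = ∑_{B ⊆ A} (-1)^{|B|} t^{dim ∩B}`. -/
noncomputable def charPolyA (A : Finset (Fin ℓ → K)) : Polynomial ℤ :=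
  ∑ B ∈ A.powerset,
    ((-1 : Polynomial ℤ) ^ B.card) * Polynomial.X ^ (Module.finrank K (interSub B))

/-- `D(Q)` is a free `S`-module with a homogeneous basis of degrees `e 0, ..., e (ℓ-1)`. -/
def IsFreeQWithExp {K : Type*} [Field K] {ℓ : ℕ} (Q : MvS K ℓ) (e : Fin ℓ → ℕ) : Prop :=
  ∃ θ : Fin ℓ → (Fin ℓ → MvS K ℓ),
    (∀ i, θ i ∈ DerQ Q ∧ θ i ≠ 0 ∧ IsHomog (θ i) (e i)) ∧
    LinearIndependent (MvS K ℓ) θ ∧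
    ∀ φ ∈ DerQ Q, φ ∈ Submodule.span (MvS K ℓ) (Set.range θ)

/-- `D(Q)` is a free `S`-module. -/
def IsFreeQ {K : Type*} [Field K] {ℓ : ℕ} (Q : MvS K ℓ) : Prop :=
  ∃ e, IsFreeQWithExp Q e

/-- The arrangement `A` is free. -/
noncomputable def IsFreeArr (A : Finset (Fin ℓ → K)) : Prop := IsFreeQ (Qpoly A)

/-- The rank of a set of hyperplanes: the codimension of their common intersection,
i.e. the dimension of the span of their defining functionals. -/
noncomputable def rkSet (s : Set (Fin ℓ → K)) : ℕ :=
  Module.finrank K (Submodule.span K s)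

/-- The Euler derivation `θ_E = ∑ x_i ∂_i`. -/
noncomputable def eulerDer (K : Type*) [Field K] (ℓ : ℕ) : Fin ℓ → MvS K ℓ :=
  fun i => X i

/-- `B` is solvable in `A` (Jambu–Papadima). -/
def Solvable (B A : Finset (Fin ℓ → K)) : Prop :=
  B ⊆ A ∧
  (∀ α ∈ B, ∀ β ∈ B, α ≠ β → ∀ a ∈ A, a ∉ B → rkSet {α, β, a} = 3) ∧
  (∀ a ∈ A, a ∉ B → ∀ b ∈ A, b ∉ B → a ≠ b → ∃ α ∈ B, rkSet {a, b, α} = 2) ∧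
  (∀ a ∈ A, a ∉ B → ∀ b ∈ A, b ∉ B → ∀ c ∈ A, c ∉ B →
    a ≠ b → a ≠ c → b ≠ c →
    ∀ α ∈ B, ∀ β ∈ B, ∀ γ ∈ B,
      rkSet {a, b, α} = 2 → rkSet {a, c, β} = 2 → rkSet {b, c, γ} = 2 →
      rkSet {α, β, γ} ≤ 2)

/-- The hyperplane `{x_i = x_j}` of a graphic arrangement. -/
noncomputable def edgeHyp (K : Type*) [Field K] {ℓ : ℕ} (i j : Fin ℓ) :
    Submodule K (Fin ℓ → K) :=
  LinearMap.ker ((LinearMap.proj (R := K) (φ := fun _ : Fin ℓ => K) i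
    - LinearMap.proj (R := K) (φ := fun _ : Fin ℓ => K) j))

/-- The coefficient vector of the form `x_i - x_j`. -/
def eform (K : Type*) [Field K] {ℓ : ℕ} (i j : Fin ℓ) : Fin ℓ → K :=
  fun t => if t = i then 1 else if t = j then -1 else 0

/-- The set of defining forms of the graphic arrangement `A_G`. -/
noncomputable def graphForms (K : Type*) [Field K] {ℓ : ℕ} (G : SimpleGraph (Fin ℓ)) :
    Finset (Fin ℓ → K) :=
  letI := Classical.decEq (Fin ℓ → K)
  letI : DecidablePred (fun p : Fin ℓ × Fin ℓ => G.Adj p.1 p.2 ∧ p.1 < p.2) :=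
    fun _ => Classical.propDecidable _
  Finset.image (fun p : Fin ℓ × Fin ℓ => eform K p.1 p.2)
    (Finset.univ.filter fun p : Fin ℓ × Fin ℓ => G.Adj p.1 p.2 ∧ p.1 < p.2)

/-- `Tri(G)`: the maximal number of new triangles created by adding a single edge. -/
noncomputable def TriG {ℓ : ℕ} (G : SimpleGraph (Fin ℓ)) : ℕ :=
  sSup {n | ∃ u v : Fin ℓ, u ≠ v ∧ ¬ G.Adj u v ∧
    n = {w | G.Adj u w ∧ G.Adj v w}.ncard}
section Helpers15
open Module
variable {K : Type*} [Field K] {ℓ : ℕ}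

lemma ellf_apply (c x : Fin ℓ → K) : ellf c x = ∑ i, c i * x i := by
  simp [ellf]

noncomputable def Edual (K : Type*) [Field K] (ℓ : ℕ) :
    (Fin ℓ → K) ≃ₗ[K] Module.Dual K (Fin ℓ → K) :=
  (Pi.basisFun K (Fin ℓ)).toDualEquiv

lemma Edual_apply (c x : Fin ℓ → K) : Edual K ℓ c x = ellf c x := by
  have hx : x = ∑ j, x j • (Pi.basisFun K (Fin ℓ)) j := by
    ext t
    simp [Pi.basisFun_apply, Finset.sum_apply, Pi.single_apply]
  rw [ellf_apply]
  conv_lhs => rw [hx]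
  rw [map_sum]
  have hb : ∀ j, ((Pi.basisFun K (Fin ℓ)).toDual c) (Pi.single j 1) = c j := by
    intro j
    have := (Pi.basisFun K (Fin ℓ)).toDual_apply_left c j
    simpa [Pi.basisFun_apply, Pi.basisFun_repr] using this
  simp [Edual, Basis.toDualEquiv_apply, hb, mul_comm]

lemma inf_hypl_eq_coann (s : Set (Fin ℓ → K)) :
    (⨅ v ∈ s, hypl v)
      = ((Submodule.span K s).map (Edual K ℓ).toLinearMap).dualCoannihilator := by
  ext x
  simp only [Submodule.mem_iInf, Submodule.mem_dualCoannihilator]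
  constructor
  · rintro hx φ hφ
    obtain ⟨v, hv, rfl⟩ := Submodule.mem_map.mp hφ
    have key : ∀ v ∈ Submodule.span K s, ((Edual K ℓ) v) x = 0 := by
      intro v hv
      induction hv using Submodule.span_induction with
      | mem v hv => simpa [Edual_apply, hypl, LinearMap.mem_ker] using hx v hv
      | zero => simp
      | add v w _ _ hv hw => simp [map_add, hv, hw]
      | smul t v _ hv => simp [map_smul, hv]
    exact key v hv
  · intro hx v hv
    have : (Edual K ℓ) v x = 0 :=
      hx _ (Submodule.mem_map_of_mem (Submodule.subset_span hv))
    simpa [hypl, LinearMap.mem_ker, ← Edual_apply] using this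

lemma finrank_inf_hypl (s : Set (Fin ℓ → K)) :
    finrank K ↥(⨅ v ∈ s, hypl v) + finrank K ↥(Submodule.span K s) = ℓ := by
  rw [inf_hypl_eq_coann]
  have h1 := Subspace.finrank_add_finrank_dualCoannihilator_eq
    ((Submodule.span K s).map (Edual K ℓ).toLinearMap)
  have h2 : finrank K ↥((Submodule.span K s).map (Edual K ℓ).toLinearMap)
      = finrank K ↥(Submodule.span K s) :=
    LinearEquiv.finrank_map_eq _ _
  have h3 : finrank K (Fin ℓ → K) = ℓ := by simp
  omega

lemma hypl_pair (a b : Fin ℓ → K) :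
    hypl a ⊓ hypl b = ⨅ v ∈ ({a, b} : Set (Fin ℓ → K)), hypl v := by
  rw [iInf_insert, iInf_singleton]

lemma hypl_smul {t : K} (ht : t ≠ 0) (a : Fin ℓ → K) : hypl (t • a) = hypl a := by
  have : ellf (t • a) = t • ellf a := by
    ext x; simp [ellf_apply, Finset.mul_sum, mul_assoc]
  rw [hypl, this, LinearMap.ker_smul _ _ ht]; rfl

lemma pair_finrank {a b : Fin ℓ → K} (ha : a ≠ 0) (hb : b ≠ 0)
    (hne : hypl a ≠ hypl b) :
    finrank K ↥(Submodule.span K ({a, b} : Set (Fin ℓ → K))) = 2 := by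
  have hind : LinearIndependent K ![a, b] := by
    rw [linearIndependent_fin2]
    refine ⟨hb, fun t ht => ?_⟩
    simp only [Matrix.cons_val_one, Matrix.head_cons, Matrix.cons_val_zero] at ht
    have ht0 : t ≠ 0 := by rintro rfl; simp at ht; exact ha ht.symm
    exact hne (by rw [← ht, hypl_smul ht0])
  have := finrank_span_eq_card (R := K) hind
  have hr : Set.range ![a, b] = ({a, b} : Set (Fin ℓ → K)) := by
    ext v
    simp [Fin.exists_fin_two, or_comm]
  rwa [hr] at this

end Helpers15

/-- if `B` is solvable in `A` then `|A^H| = |B|` for any `H ∈ A \ B`. -/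
theorem stmt15 {K : Type*} [Field K] [CharZero K] [DecidableEq K] {ℓ : ℕ}
    (A B : Finset (Fin ℓ → K)) (hA : IsArrangement A)
    (hrk : 3 ≤ rkSet (A : Set (Fin ℓ → K)))
    (hsolv : Solvable B A)
    (h : Fin ℓ → K) (hhA : h ∈ A) (hhB : h ∉ B) :
    restrictCount (A.erase h) h = B.card := by
  letI := Classical.decEq (Submodule K (Fin ℓ → K))
  have hBA := hsolv.1
  have hBsub : B ⊆ A.erase h := Finset.subset_erase.mpr ⟨hBA, hhB⟩
  have hh0 : h ≠ 0 := hA.1 h hhA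
  have hyplne : ∀ c ∈ A, c ≠ h → hypl c ≠ hypl h :=
    fun c hc hne he => hne (hA.2 c hc h hhA he)
  set f : (Fin ℓ → K) → Submodule K (Fin ℓ → K) := fun c => hypl c ⊓ hypl h with hf
  have key : ∀ c ∈ A.erase h, ∃ α ∈ B, f c = f α := by
    intro c hc
    obtain ⟨hch, hcA⟩ := Finset.mem_erase.mp hc
    by_cases hcB : c ∈ B
    · exact ⟨c, hcB, rfl⟩
    · obtain ⟨α, hαB, hrk2⟩ := hsolv.2.2.1 c hcA hcB h hhA hhB hch
      have hrk2' : Module.finrank K ↥(Submodule.span K ({c, h, α} : Set (Fin ℓ → K))) = 2 := hrk2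
      have hα0 : α ≠ 0 := hA.1 α (hBA hαB)
      have hc0 : c ≠ 0 := hA.1 c hcA
      have hαh : α ≠ h := fun e => hhB (e ▸ hαB)
      have h1 : Module.finrank K ↥(Submodule.span K ({c, h} : Set (Fin ℓ → K))) = 2 :=
        pair_finrank hc0 hh0 (hyplne c hcA hch)
      have h2 : Module.finrank K ↥(Submodule.span K ({α, h} : Set (Fin ℓ → K))) = 2 :=
        pair_finrank hα0 hh0 (hyplne α (hBA hαB) hαh)
      have hsp1 : Submodule.span K ({c, h} : Set (Fin ℓ → K))
          = Submodule.span K ({c, h, α} : Set (Fin ℓ → K)) :=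
        Submodule.eq_of_le_of_finrank_le
          (Submodule.span_mono (by intro v hv; simp at hv ⊢; tauto)) (by omega)
      have hsp2 : Submodule.span K ({α, h} : Set (Fin ℓ → K))
          = Submodule.span K ({c, h, α} : Set (Fin ℓ → K)) :=
        Submodule.eq_of_le_of_finrank_le
          (Submodule.span_mono (by intro v hv; simp at hv ⊢; tauto)) (by omega)
      have hsp : Submodule.span K ({c, h} : Set (Fin ℓ → K))
          = Submodule.span K ({α, h} : Set (Fin ℓ → K)) := hsp1.trans hsp2.symm
      refine ⟨α, hαB, ?_⟩
      show hypl c ⊓ hypl h = hypl α ⊓ hypl h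
      rw [hypl_pair, hypl_pair, inf_hypl_eq_coann, inf_hypl_eq_coann, hsp]
  have finj : Set.InjOn f ↑B := by
    intro α hα β hβ hfe
    by_contra hne
    have hr3 : rkSet {α, β, h} = 3 := hsolv.2.1 α hα β hβ hne h hhA hhB
    have hr3' : Module.finrank K ↥(Submodule.span K ({α, β, h} : Set (Fin ℓ → K))) = 3 := hr3
    have hα0 : α ≠ 0 := hA.1 α (hBA hα)
    have hαh : α ≠ h := fun e => hhB (e ▸ (hα : α ∈ B))
    have h2 : Module.finrank K ↥(Submodule.span K ({α, h} : Set (Fin ℓ → K))) = 2 :=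
      pair_finrank hα0 hh0 (hyplne α (hBA hα) hαh)
    have hle : (⨅ v ∈ ({α, h} : Set (Fin ℓ → K)), hypl v)
        ≤ ⨅ v ∈ ({α, β, h} : Set (Fin ℓ → K)), hypl v := by
      rw [← hypl_pair, iInf_insert, iInf_insert, iInf_singleton]
      refine le_inf inf_le_left (le_inf ?_ inf_le_right)
      have : hypl α ⊓ hypl h = hypl β ⊓ hypl h := hfe
      rw [this]; exact inf_le_left
    have e1 := finrank_inf_hypl ({α, β, h} : Set (Fin ℓ → K))
    have e2 := finrank_inf_hypl ({α, h} : Set (Fin ℓ → K))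
    have e4 := Submodule.finrank_mono hle
    omega
  have himg : (A.erase h).image f = B.image f := by
    apply Finset.Subset.antisymm
    · intro y hy
      obtain ⟨c, hc, rfl⟩ := Finset.mem_image.mp hy
      obtain ⟨α, hα, he⟩ := key c hc
      exact Finset.mem_image.mpr ⟨α, hα, he.symm⟩
    · exact Finset.image_subset_image hBsub
  show ((A.erase h).image f).card = B.card
  rw [himg, Finset.card_image_of_injOn finj]
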